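/- Let (W,S) be a Coxeter system, W₁ a standard parabolic subgroup, and σ, w ∈ W. Set K_{σW₁}(w) = { v ∈ σW₁ : v ≤ w }. If K_{σW₁}(w) is nonempty (equivalently, if brmin(σW₁) ≤ w), then K_{σW₁}(w) has a unique maximal element in the Bruhat order. -/

import Mathlib

variable {B W : Type*} [Group W] {M : CoxeterMatrix B}

/-- The (strong) Bruhat order on the Coxeter group `W`: `u ≤ v` if and only if some
reduced word for `v` admits a sublist whose product is `u`. -/
def BruhatLE (cs : CoxeterSystem M W) (u v : W) : Prop :=
  ∃ ω : List B, cs.IsReduced ω ∧ cs.wordProd ω = v ∧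
    ∃ ω' : List B, ω'.Sublist ω ∧ cs.wordProd ω' = u

/-- The strict Bruhat order. -/
def BruhatLT (cs : CoxeterSystem M W) (u v : W) : Prop :=
  BruhatLE cs u v ∧ u ≠ v

/-- `m` is the unique minimal element of `K` in the Bruhat order, i.e. `m ∈ K` and
`m` is Bruhat-below every element of `K`. -/
def IsBrMin (cs : CoxeterSystem M W) (K : Set W) (m : W) : Prop :=
  m ∈ K ∧ ∀ x ∈ K, BruhatLE cs m x

/-- `m` is the unique maximal element of `K` in the Bruhat order, i.e. `m ∈ K` and
`m` is Bruhat-above every element of `K`. -/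
def IsBrMax (cs : CoxeterSystem M W) (K : Set W) (m : W) : Prop :=
  m ∈ K ∧ ∀ x ∈ K, BruhatLE cs x m

/-- A standard parabolic subgroup: a subgroup generated by a subset of the simple
reflections. -/
def IsStdParabolic (cs : CoxeterSystem M W) (P : Subgroup W) : Prop :=
  ∃ X : Set B, P = Subgroup.closure (cs.simple '' X)

/-- The left coset `u•W₁ = {u * b : b ∈ W₁}`. -/
def lCoset (W₁ : Subgroup W) (u : W) : Set W := {x | ∃ b ∈ W₁, x = u * b}

/-- The double coset `W₁ u W₂ = {a * u * b : a ∈ W₁, b ∈ W₂}`. -/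
def dblCoset (W₁ W₂ : Subgroup W) (u : W) : Set W :=
  {x | ∃ a ∈ W₁, ∃ b ∈ W₂, x = a * u * b}

set_option linter.unusedSectionVars false
set_option maxHeartbeats 1000000

open List CoxeterSystem

namespace BruhatAux

variable {B W : Type*} [Group W] {M : CoxeterMatrix B} (cs : CoxeterSystem M W)

local prefix:100 "ℓ" => cs.length
local prefix:100 "π" => cs.wordProd
local prefix:100 "ris" => cs.rightInvSeq

open Classical in
noncomputable def sgnCount (t : W) (L : List W) : ZMod 2 :=
  (L.map (fun u => if u = t then (1 : ZMod 2) else 0)).sum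

open Classical in
lemma sgnCount_nil (t : W) : sgnCount t ([] : List W) = 0 := rfl

open Classical in
lemma sgnCount_cons (t a : W) (L : List W) :
    sgnCount t (a :: L) = (if a = t then (1:ZMod 2) else 0) + sgnCount t L := by
  simp [sgnCount]

open Classical in
lemma sgnCount_append (t : W) (L L' : List W) :
    sgnCount t (L ++ L') = sgnCount t L + sgnCount t L' := by
  simp [sgnCount]

open Classical in
lemma sgnCount_reverse (t : W) (L : List W) :
    sgnCount t L.reverse = sgnCount t L := by
  simp [sgnCount, List.sum_reverse]

open Classical in
lemma mem_of_sgnCount_ne_zero {t : W} {L : List W} (h : sgnCount t L ≠ 0) : t ∈ L := by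
  by_contra hmem
  apply h
  apply List.sum_eq_zero
  intro x hx
  obtain ⟨u, hu, rfl⟩ := List.mem_map.mp hx
  rw [if_neg]
  rintro rfl; exact hmem hu

lemma mul_eq_iff' (a b c t : W) : a * t * b = c ↔ t = a⁻¹ * c * b⁻¹ :=
  ⟨fun h => by rw [← h]; group, fun h => by rw [h]; group⟩

open Classical in
/-- The basic involutions of Tits' sign representation. -/
noncomputable def permMap (i : B) : Equiv.Perm (W × ZMod 2) where
  toFun x := (cs.simple i * x.1 * cs.simple i, x.2 + if x.1 = cs.simple i then 1 else 0)
  invFun x := (cs.simple i * x.1 * cs.simple i, x.2 + if x.1 = cs.simple i then 1 else 0)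
  left_inv := by
    rintro ⟨t, e⟩
    have hs : cs.simple i * cs.simple i = 1 := cs.simple_mul_simple_self i
    have h1 : cs.simple i * (cs.simple i * t * cs.simple i) * cs.simple i = t := by
      have : cs.simple i * (cs.simple i * t * cs.simple i) * cs.simple i
          = (cs.simple i * cs.simple i) * t * (cs.simple i * cs.simple i) := by group
      rw [this, hs, one_mul, mul_one]
    have h2 : (cs.simple i * t * cs.simple i = cs.simple i) ↔ (t = cs.simple i) := by
      rw [mul_eq_iff', cs.inv_simple, hs, one_mul]
    simp only [Prod.mk.injEq, h1]
    refine ⟨trivial, ?_⟩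
    by_cases h : t = cs.simple i
    · rw [if_pos h, if_pos (h2.mpr h), add_assoc, CharTwo.add_self_eq_zero, add_zero]
    · rw [if_neg h, if_neg (fun hh => h (h2.mp hh)), add_zero, add_zero]
  right_inv := by
    rintro ⟨t, e⟩
    have hs : cs.simple i * cs.simple i = 1 := cs.simple_mul_simple_self i
    have h1 : cs.simple i * (cs.simple i * t * cs.simple i) * cs.simple i = t := by
      have : cs.simple i * (cs.simple i * t * cs.simple i) * cs.simple i
          = (cs.simple i * cs.simple i) * t * (cs.simple i * cs.simple i) := by group
      rw [this, hs, one_mul, mul_one]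
    have h2 : (cs.simple i * t * cs.simple i = cs.simple i) ↔ (t = cs.simple i) := by
      rw [mul_eq_iff', cs.inv_simple, hs, one_mul]
    simp only [Prod.mk.injEq, h1]
    refine ⟨trivial, ?_⟩
    by_cases h : t = cs.simple i
    · rw [if_pos h, if_pos (h2.mpr h), add_assoc, CharTwo.add_self_eq_zero, add_zero]
    · rw [if_neg h, if_neg (fun hh => h (h2.mp hh)), add_zero, add_zero]

open Classical in
lemma permMap_apply (i : B) (t : W) (e : ZMod 2) :
    permMap cs i (t, e) = (cs.simple i * t * cs.simple i,
      e + if t = cs.simple i then 1 else 0) := rfl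

open Classical in
lemma permMap_mul_pow_apply (i j : B) (k : ℕ) (t : W) (e : ZMod 2) :
    ((permMap cs i * permMap cs j) ^ k) (t, e) =
    ((cs.simple i * cs.simple j) ^ k * t * (((cs.simple i * cs.simple j) ^ k)⁻¹ : W),
      e + ∑ n ∈ Finset.range (2 * k),
        if t = cs.simple j * (cs.simple i * cs.simple j) ^ n then (1 : ZMod 2) else 0) := by
  induction k generalizing t e with
  | zero => simp
  | succ k ih =>
    have hsi : cs.simple i * cs.simple i = 1 := cs.simple_mul_simple_self i
    have hsj : cs.simple j * cs.simple j = 1 := cs.simple_mul_simple_self j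
    have hstep : ((permMap cs i * permMap cs j) ^ (k+1)) (t, e)
        = ((permMap cs i * permMap cs j) ^ k) ((permMap cs i * permMap cs j) (t, e)) := by
      rw [pow_succ]; rfl
    have hone : (permMap cs i * permMap cs j) (t, e)
        = ((cs.simple i * cs.simple j) * t * (cs.simple i * cs.simple j)⁻¹,
            e + ((if t = cs.simple j * (cs.simple i * cs.simple j) ^ 0 then (1:ZMod 2) else 0)
            + if t = cs.simple j * (cs.simple i * cs.simple j) ^ 1 then 1 else 0)) := by
      show permMap cs i (permMap cs j (t, e)) = _
      rw [permMap_apply, permMap_apply]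
      have hconj : cs.simple i * (cs.simple j * t * cs.simple j) * cs.simple i
          = (cs.simple i * cs.simple j) * t * (cs.simple i * cs.simple j)⁻¹ := by
        rw [mul_inv_rev, cs.inv_simple, cs.inv_simple]
        group
      have hc0 : (t = cs.simple j) ↔
          (t = cs.simple j * (cs.simple i * cs.simple j) ^ 0) := by
        rw [pow_zero, mul_one]
      have hc1 : (cs.simple j * t * cs.simple j = cs.simple i) ↔
          (t = cs.simple j * (cs.simple i * cs.simple j) ^ 1) := by
        rw [mul_eq_iff', cs.inv_simple, pow_one, mul_assoc]
      rw [hconj]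
      refine Prod.ext rfl ?_
      simp only
      rw [if_congr hc0 rfl rfl, if_congr hc1 rfl rfl, add_assoc]
    rw [hstep, hone, ih]
    have hconjsj : (cs.simple i * cs.simple j)⁻¹ * cs.simple j
        = cs.simple j * (cs.simple i * cs.simple j) := by
      rw [mul_inv_rev, cs.inv_simple, cs.inv_simple]
      group
    refine Prod.ext ?_ ?_
    · simp only
      rw [pow_succ]
      group
    · simp only
      have hshift : ∀ n : ℕ,
          ((cs.simple i * cs.simple j) * t * (cs.simple i * cs.simple j)⁻¹
            = cs.simple j * (cs.simple i * cs.simple j) ^ n)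
          ↔ (t = cs.simple j * (cs.simple i * cs.simple j) ^ (n + 2)) := by
        intro n
        rw [mul_eq_iff', inv_inv]
        have key : (cs.simple i * cs.simple j)⁻¹ * (cs.simple j * (cs.simple i * cs.simple j) ^ n)
            * (cs.simple i * cs.simple j)
            = cs.simple j * (cs.simple i * cs.simple j) ^ (n + 2) := by
          calc (cs.simple i * cs.simple j)⁻¹ * (cs.simple j * (cs.simple i * cs.simple j) ^ n)
              * (cs.simple i * cs.simple j)
              = ((cs.simple i * cs.simple j)⁻¹ * cs.simple j)
                * ((cs.simple i * cs.simple j) ^ n * (cs.simple i * cs.simple j)) := by group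
            _ = (cs.simple j * (cs.simple i * cs.simple j))
                * (cs.simple i * cs.simple j) ^ (n + 1) := by rw [hconjsj, pow_succ]
            _ = cs.simple j * (cs.simple i * cs.simple j) ^ (n + 2) := by
                rw [mul_assoc, ← pow_succ']
        rw [key]
      have hsum : (∑ n ∈ Finset.range (2 * k),
          if (cs.simple i * cs.simple j) * t * (cs.simple i * cs.simple j)⁻¹
            = cs.simple j * (cs.simple i * cs.simple j) ^ n then (1:ZMod 2) else 0)
          = ∑ n ∈ Finset.range (2 * k),
          if t = cs.simple j * (cs.simple i * cs.simple j) ^ (n + 2) then (1:ZMod 2) else 0 :=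
        Finset.sum_congr rfl (fun n _ => if_congr (hshift n) rfl rfl)
      rw [hsum]
      have h2k : 2 * (k + 1) = (2 * k + 1) + 1 := by ring
      rw [h2k, Finset.sum_range_succ', Finset.sum_range_succ']
      have hreind : (∑ n ∈ Finset.range (2 * k),
          if t = cs.simple j * (cs.simple i * cs.simple j) ^ (n + 1 + 1) then (1:ZMod 2) else 0)
          = ∑ n ∈ Finset.range (2 * k),
          if t = cs.simple j * (cs.simple i * cs.simple j) ^ (n + 2) then (1:ZMod 2) else 0 :=
        Finset.sum_congr rfl (fun n _ => by norm_num)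
      rw [hreind]
      simp only [zero_add, pow_zero, mul_one]
      abel
  

lemma permMap_liftable : M.IsLiftable (fun i => (permMap cs i : Equiv.Perm (W × ZMod 2))) := by
  intro i j
  apply Equiv.ext
  rintro ⟨t, e⟩
  classical
  rw [permMap_mul_pow_apply]
  have hg : (cs.simple i * cs.simple j) ^ M.M i j = 1 := cs.simple_mul_simple_pow i j
  refine Prod.ext ?_ ?_
  · simp [hg]
  · simp only [Equiv.Perm.coe_one, id_eq]
    have h2m : 2 * M.M i j = M.M i j + M.M i j := by ring
    rw [h2m, Finset.sum_range_add]
    have hsame : (∑ n ∈ Finset.range (M.M i j),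
        if t = cs.simple j * (cs.simple i * cs.simple j) ^ (M.M i j + n) then (1:ZMod 2) else 0)
        = ∑ n ∈ Finset.range (M.M i j),
        if t = cs.simple j * (cs.simple i * cs.simple j) ^ n then (1:ZMod 2) else 0 := by
      refine Finset.sum_congr rfl (fun n _ => ?_)
      rw [pow_add, hg, one_mul]
    rw [hsame, CharTwo.add_self_eq_zero, add_zero]

/-- Tits' sign representation. -/
noncomputable def brRho : W →* Equiv.Perm (W × ZMod 2) :=
  cs.lift ⟨fun i => permMap cs i, permMap_liftable cs⟩

lemma brRho_simple (i : B) : brRho cs (cs.simple i) = permMap cs i :=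
  cs.lift_apply_simple (permMap_liftable cs) i

lemma ris_cons (i : B) (ω : List B) :
    cs.rightInvSeq (i :: ω) = ((π ω)⁻¹ * cs.simple i * π ω) :: cs.rightInvSeq ω := rfl

open Classical in
lemma brRho_wordProd (ω : List B) (t : W) (e : ZMod 2) :
    brRho cs (π ω) (t, e) = (π ω * t * (π ω)⁻¹, e + sgnCount t (ris ω)) := by
  induction ω generalizing t e with
  | nil => simp [sgnCount_nil]
  | cons i ω ih =>
    rw [cs.wordProd_cons, map_mul, Equiv.Perm.mul_apply, ih, brRho_simple, permMap_apply]
    refine Prod.ext ?_ ?_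
    · simp only
      rw [mul_inv_rev, cs.inv_simple]
      group
    · simp only
      rw [ris_cons, sgnCount_cons]
      have hcond : (π ω * t * (π ω)⁻¹ = cs.simple i)
          ↔ ((π ω)⁻¹ * cs.simple i * π ω = t) := by
        rw [mul_eq_iff', inv_inv, eq_comm]
      rw [if_congr hcond rfl rfl]
      abel

open Classical in
lemma sgnCount_eq_of_wordProd_eq {ω ω' : List B} (h : π ω = π ω') (t : W) :
    sgnCount t (ris ω) = sgnCount t (ris ω') := by
  have h1 := brRho_wordProd cs ω t 0
  have h2 := brRho_wordProd cs ω' t 0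
  rw [← h] at h2
  rw [h1] at h2
  have h3 := congrArg Prod.snd h2
  simp only at h3
  rwa [zero_add, zero_add] at h3

lemma ris_append (ω₁ ω₂ : List B) :
    cs.rightInvSeq (ω₁ ++ ω₂)
      = (cs.rightInvSeq ω₁).map (fun u => (π ω₂)⁻¹ * u * π ω₂) ++ cs.rightInvSeq ω₂ := by
  induction ω₁ with
  | nil => simp
  | cons i ω₁ ih =>
    rw [List.cons_append, ris_cons, ris_cons, ih, List.map_cons, List.cons_append]
    congr 1
    rw [cs.wordProd_append, mul_inv_rev]
    group

lemma lis_eq_map_ris (ω : List B) :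
    cs.leftInvSeq ω = (cs.rightInvSeq ω).map (fun u => π ω * u * (π ω)⁻¹) := by
  induction ω with
  | nil => simp
  | cons i ω ih =>
    have : cs.leftInvSeq (i :: ω)
        = cs.simple i :: (cs.leftInvSeq ω).map (MulAut.conj (cs.simple i)) := rfl
    rw [this, ris_cons, ih, List.map_cons, List.map_map, cs.wordProd_cons]
    congr 1
    · rw [mul_inv_rev, cs.inv_simple]
      have h1 : cs.simple i * π ω * ((π ω)⁻¹ * cs.simple i * π ω) * ((π ω)⁻¹ * cs.simple i)
          = (cs.simple i * cs.simple i) * cs.simple i * ((π ω) * (π ω)⁻¹) := by group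
      rw [h1, cs.simple_mul_simple_self, mul_inv_cancel, one_mul, mul_one]
    · apply List.map_congr_left
      intro u _
      simp only [Function.comp_apply, MulAut.conj_apply, mul_inv_rev, cs.inv_simple]
      group
open Classical in
lemma sgnCount_map_conj (t g : W) (L : List W) :
    sgnCount t (L.map (fun u => g⁻¹ * u * g)) = sgnCount (g * t * g⁻¹) L := by
  simp only [sgnCount, List.map_map]
  congr 1
  apply List.map_congr_left
  intro u _
  have hiff : (g⁻¹ * u * g = t) ↔ (u = g * t * g⁻¹) := by
    rw [mul_eq_iff', inv_inv]
  simp only [Function.comp_apply]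
  rw [if_congr hiff rfl rfl, if_congr (Iff.symm eq_comm) rfl rfl]

open Classical in
lemma sgnCount_map_conj' (t g : W) (L : List W) :
    sgnCount t (L.map (fun u => g * u * g⁻¹)) = sgnCount (g⁻¹ * t * g) L := by
  have := sgnCount_map_conj t g⁻¹ L
  rw [inv_inv] at this
  rw [this]

open Classical in
lemma sgnCount_reflection_word (x : W) (k : B) (χ : List B) (hχ : π χ = x) :
    sgnCount (x * cs.simple k * x⁻¹) (ris (χ ++ ([k] ++ χ.reverse))) = 1 := by
  have hβ : π ([k] ++ χ.reverse) = cs.simple k * x⁻¹ := by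
    rw [cs.wordProd_append, cs.wordProd_singleton, cs.wordProd_reverse, hχ]
  rw [ris_append, hβ, sgnCount_append]
  have hpart1 : sgnCount (x * cs.simple k * x⁻¹)
      ((cs.rightInvSeq χ).map (fun u => (cs.simple k * x⁻¹)⁻¹ * u * (cs.simple k * x⁻¹)))
      = sgnCount (cs.simple k) (cs.rightInvSeq χ) := by
    rw [sgnCount_map_conj]
    have h5 : (cs.simple k * x⁻¹) * (x * cs.simple k * x⁻¹) * (cs.simple k * x⁻¹)⁻¹
        = cs.simple k := by group
    rw [h5]
  have hpart2 : sgnCount (x * cs.simple k * x⁻¹) (cs.rightInvSeq ([k] ++ χ.reverse))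
      = 1 + sgnCount (cs.simple k) (cs.rightInvSeq χ) := by
    have hcons : cs.rightInvSeq ([k] ++ χ.reverse)
        = ((π χ.reverse)⁻¹ * cs.simple k * π χ.reverse) :: cs.rightInvSeq χ.reverse := rfl
    rw [hcons, sgnCount_cons]
    have hhead : (π χ.reverse)⁻¹ * cs.simple k * π χ.reverse = x * cs.simple k * x⁻¹ := by
      rw [cs.wordProd_reverse, hχ, inv_inv]
    rw [if_pos hhead]
    congr 1
    rw [cs.rightInvSeq_reverse, sgnCount_reverse, lis_eq_map_ris, hχ, sgnCount_map_conj']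
    have : x⁻¹ * (x * cs.simple k * x⁻¹) * x = cs.simple k := by group
    rw [this]
  rw [hpart1, hpart2]
  linear_combination (CharTwo.add_self_eq_zero (sgnCount (cs.simple k) (cs.rightInvSeq χ)))

open Classical in
lemma sgnCount_eq_one_of_right_descent {t w : W} (ht : cs.IsReflection t)
    (hlt : ℓ (w * t) < ℓ w) {ω : List B} (hω : π ω = w) :
    sgnCount t (ris ω) = 1 := by
  have htt : t * t = 1 := ht.mul_self
  have htinv : t⁻¹ = t := ht.inv
  obtain ⟨x, k, htx⟩ := ht
  obtain ⟨χ, hχ⟩ := cs.wordProd_surjective x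
  obtain ⟨α, hα_red, hα⟩ := cs.exists_reduced_word' (w * t)
  set τ : List B := χ ++ ([k] ++ χ.reverse) with hτ_def
  have hτ : π τ = t := by
    rw [hτ_def, cs.wordProd_append, cs.wordProd_append, cs.wordProd_singleton,
      cs.wordProd_reverse, hχ, htx, mul_assoc]
  have hword : π (α ++ τ) = w := by
    rw [cs.wordProd_append, hτ, ← hα, mul_assoc, htt, mul_one]
  have htrans : sgnCount t (ris ω) = sgnCount t (ris (α ++ τ)) :=
    sgnCount_eq_of_wordProd_eq cs (by rw [hω, hword]) t
  rw [htrans, ris_append, hτ, sgnCount_append]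
  have hpartA : sgnCount t ((cs.rightInvSeq α).map (fun u => t⁻¹ * u * t))
      = sgnCount t (cs.rightInvSeq α) := by
    rw [sgnCount_map_conj]
    have h6 : t * t * t⁻¹ = t := by rw [htt, one_mul, htinv]
    rw [h6]
  have hzero : sgnCount t (cs.rightInvSeq α) = 0 := by
    by_contra h0
    have hmem : t ∈ cs.rightInvSeq α := mem_of_sgnCount_ne_zero h0
    have hinv := cs.isRightInversion_of_mem_rightInvSeq hα_red hmem
    rw [← hα] at hinv
    have : ℓ (w * t * t) < ℓ (w * t) := hinv.2
    rw [mul_assoc, htt, mul_one] at this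
    exact absurd hlt (by omega)
  have hpartB : sgnCount t (cs.rightInvSeq τ) = 1 := by
    have := sgnCount_reflection_word cs x k χ hχ
    rw [← htx] at this
    exact this
  rw [hpartA, hzero, hpartB, zero_add]

/-- The strong exchange property (right version). -/
lemma rightExchange {t w : W} (ht : cs.IsReflection t) (hlt : ℓ (w * t) < ℓ w)
    {ω : List B} (hω : π ω = w) : ∃ j, j < ω.length ∧ π (ω.eraseIdx j) = w * t := by
  classical
  have h1 : sgnCount t (ris ω) = 1 := sgnCount_eq_one_of_right_descent cs ht hlt hω
  have hmem : t ∈ ris ω := mem_of_sgnCount_ne_zero (by rw [h1]; exact one_ne_zero)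
  obtain ⟨j, hj, hgt⟩ := List.mem_iff_getElem.mp hmem
  rw [cs.length_rightInvSeq] at hj
  refine ⟨j, hj, ?_⟩
  have hkey := cs.wordProd_mul_getD_rightInvSeq ω j
  rw [List.getD_eq_getElem _ _ (by rw [cs.length_rightInvSeq]; exact hj), hgt, hω] at hkey
  exact hkey.symm

lemma isReduced_nil : cs.IsReduced ([] : List B) := by
  simp [CoxeterSystem.IsReduced]

/-- Deletion property: every word has a reduced sublist with the same product. -/
lemma deletion : ∀ (n : ℕ) (ω : List B), ω.length ≤ n →
    ∃ ω', ω'.Sublist ω ∧ cs.IsReduced ω' ∧ π ω' = π ω := by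
  intro n
  induction n with
  | zero =>
    intro ω h
    have : ω = [] := List.eq_nil_of_length_eq_zero (Nat.le_zero.mp h)
    subst this
    exact ⟨[], List.Sublist.refl _, isReduced_nil cs, rfl⟩
  | succ n ih =>
    intro ω hlen
    by_cases hred : cs.IsReduced ω
    · exact ⟨ω, List.Sublist.refl _, hred, rfl⟩
    · have hdesc : ∃ k, k < ω.length ∧ ℓ (π (ω.take (k+1))) < ℓ (π (ω.take k)) := by
        by_contra hno
        push_neg at hno
        have hstep : ∀ k, k ≤ ω.length → ℓ (π (ω.take k)) = k := by
          intro k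
          induction k with
          | zero => intro _; simp
          | succ k ihk =>
            intro hk
            have hk' : k < ω.length := hk
            have h1 := ihk (le_of_lt hk')
            have htake : ω.take (k+1) = ω.take k ++ [ω[k]] := by
              rw [List.take_succ, List.getElem?_eq_getElem hk']
              rfl
            have h2 : π (ω.take (k+1)) = π (ω.take k) * cs.simple (ω[k]) := by
              rw [htake, cs.wordProd_append, cs.wordProd_singleton]
            rcases cs.length_mul_simple (π (ω.take k)) (ω[k]) with h3 | h3
            · rw [h2, h3, h1]
            · exfalso
              have := hno k hk'
              rw [h2] at this
              omega
        have := hstep ω.length le_rfl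
        rw [List.take_length] at this
        exact hred this
      obtain ⟨k, hk, hdesc⟩ := hdesc
      have htake : ω.take (k+1) = ω.take k ++ [ω[k]] := by
        rw [List.take_succ, List.getElem?_eq_getElem hk]
        rfl
      have h2 : π (ω.take (k+1)) = π (ω.take k) * cs.simple (ω[k]) := by
        rw [htake, cs.wordProd_append, cs.wordProd_singleton]
      obtain ⟨j, hj, hjeq⟩ := rightExchange cs (cs.isReflection_simple (ω[k]))
        (by rw [← h2]; exact hdesc) (rfl : π (ω.take k) = π (ω.take k))
      rw [← h2] at hjeq
      -- new word
      set ω₂ : List B := (ω.take k).eraseIdx j ++ ω.drop (k+1) with hω₂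
      have hπ₂ : π ω₂ = π ω := by
        rw [hω₂, cs.wordProd_append, hjeq, ← cs.wordProd_append, List.take_append_drop]
      have hsub₂ : ω₂.Sublist ω := by
        have s1 : ((ω.take k).eraseIdx j).Sublist (ω.take (k+1)) := by
          apply List.Sublist.trans (List.eraseIdx_sublist _ j)
          have : ω.take k = (ω.take (k+1)).take k := by
            rw [List.take_take]
            congr 1
            omega
          rw [this]
          exact List.take_sublist _ _
        have s2 := List.Sublist.append s1 (List.Sublist.refl (ω.drop (k+1)))
        rwa [List.take_append_drop] at s2
      have hlen₂ : ω₂.length ≤ n := by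
        have hjlen : j < (ω.take k).length := hj
        have e1 : ((ω.take k).eraseIdx j).length + 1 = (ω.take k).length :=
          List.length_eraseIdx_add_one hjlen
        rw [List.length_take] at e1
        rw [hω₂, List.length_append, List.length_drop]
        omega
      obtain ⟨ω', hsub', hred', hπ'⟩ := ih ω₂ hlen₂
      exact ⟨ω', hsub'.trans hsub₂, hred', by rw [hπ', hπ₂]⟩

/-- One step of the (right) Bruhat chain order. -/
def rstep (x y : W) : Prop := ℓ x < ℓ y ∧ ∃ t, cs.IsReflection t ∧ y = x * t

/-- The Bruhat chain order. -/
def chle : W → W → Prop := Relation.ReflTransGen (rstep cs)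

lemma chle_refl (x : W) : chle cs x x := Relation.ReflTransGen.refl

lemma chle_trans {x y z : W} (h1 : chle cs x y) (h2 : chle cs y z) : chle cs x z :=
  Relation.ReflTransGen.trans h1 h2

lemma chle_length {u w : W} (h : chle cs u w) : ℓ u ≤ ℓ w := by
  induction h with
  | refl => exact le_rfl
  | tail _ hstep ih => exact le_trans ih (le_of_lt hstep.1)

lemma chle_cases {u w : W} (h : chle cs u w) : u = w ∨ ℓ u < ℓ w := by
  rcases Relation.ReflTransGen.cases_head h with rfl | ⟨d, hd, hdw⟩
  · exact Or.inl rfl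
  · exact Or.inr (lt_of_lt_of_le hd.1 (chle_length cs hdw))

/-- Chain order implies the subword property for every reduced word. -/
lemma chle_subword {u w : W} (h : chle cs u w) :
    ∀ ω : List B, cs.IsReduced ω → π ω = w →
      ∃ ω', ω'.Sublist ω ∧ cs.IsReduced ω' ∧ π ω' = u := by
  induction h with
  | refl => exact fun ω hred hπ => ⟨ω, List.Sublist.refl _, hred, hπ⟩
  | tail hyb hstep ih =>
    rename_i b c
    intro ω hred hπ
    obtain ⟨hlen, t, ht, hc⟩ := hstep
    have hb : b = c * t := by rw [hc, mul_assoc, ht.mul_self, mul_one]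
    have hlt : ℓ (c * t) < ℓ c := by rw [← hb]; exact hlen
    obtain ⟨j, hj, hjeq⟩ := rightExchange cs ht hlt hπ
    rw [← hb] at hjeq
    obtain ⟨D, hDsub, hDred, hDπ⟩ := deletion cs (ω.eraseIdx j).length (ω.eraseIdx j) le_rfl
    rw [hjeq] at hDπ
    obtain ⟨ω', hsub', hred', hπ'⟩ := ih D hDred hDπ
    exact ⟨ω', hsub'.trans (hDsub.trans (List.eraseIdx_sublist _ _)), hred', hπ'⟩

lemma grand : ∀ n : ℕ, ∀ w : W, ℓ w = n →
    ((∀ ω : List B, cs.IsReduced ω → π ω = w → ∀ ω' : List B, ω'.Sublist ω →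
        chle cs (π ω') w) ∧
     (∀ t : W, cs.IsReflection t → ℓ (w * t) < ℓ w → ∀ i : B,
        chle cs (w * t * cs.simple i) w ∨ chle cs (w * t * cs.simple i) (w * cs.simple i)) ∧
     (∀ u : W, chle cs u w → ∀ i : B,
        chle cs (u * cs.simple i) w ∨ chle cs (u * cs.simple i) (w * cs.simple i))) := by
  intro n
  induction n using Nat.strong_induction_on with
  | _ n IH =>
  intro w hw
  -- Part P
  have Ppart : ∀ t : W, cs.IsReflection t → ℓ (w * t) < ℓ w → ∀ i : B,
      chle cs (w * t * cs.simple i) w ∨ chle cs (w * t * cs.simple i) (w * cs.simple i) := by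
    intro t ht hlt i
    by_cases hcase1 : ℓ (w * t * cs.simple i) < ℓ (w * t)
    · left
      refine Relation.ReflTransGen.head ⟨hcase1, cs.simple i, cs.isReflection_simple i, ?_⟩
        (Relation.ReflTransGen.single ⟨hlt, t, ht, ?_⟩)
      · rw [cs.simple_mul_simple_cancel_right]
      · rw [mul_assoc, ht.mul_self, mul_one]
    · have hasc1 : ℓ (w * t) < ℓ (w * t * cs.simple i) :=
        lt_of_le_of_ne (not_lt.mp hcase1) (Ne.symm (cs.length_mul_simple_ne (w * t) i))
      by_cases hcase2 : ℓ w < ℓ (w * cs.simple i)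
      · right
        have hlen : ℓ (w * t * cs.simple i) < ℓ (w * cs.simple i) := by
          have h1 : ℓ (w * t * cs.simple i) ≤ ℓ (w * t) + 1 := by
            have := cs.length_mul_le (w * t) (cs.simple i)
            rwa [cs.length_simple] at this
          omega
        refine Relation.ReflTransGen.single ⟨hlen, cs.simple i * t * cs.simple i, ?_, ?_⟩
        · have := ht.conj (cs.simple i)
          rwa [cs.inv_simple] at this
        · have : w * t * cs.simple i * (cs.simple i * t * cs.simple i)
              = w * (t * (cs.simple i * cs.simple i) * t) * cs.simple i := by group
          rw [this, cs.simple_mul_simple_self, mul_one, ht.mul_self, mul_one]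
      · have hdesc2 : ℓ (w * cs.simple i) < ℓ w :=
          lt_of_le_of_ne (not_lt.mp hcase2) (cs.length_mul_simple_ne w i)
      -- build reduced word of w ending in i
        obtain ⟨δ, hδred, hδ⟩ := cs.exists_reduced_word' (w * cs.simple i)
        have hword : π (δ ++ [i]) = w := by
          rw [cs.wordProd_append, cs.wordProd_singleton, ← hδ,
            cs.simple_mul_simple_cancel_right]
        have hlenw : ℓ w = δ.length + 1 := by
          have h1 : ℓ (w * cs.simple i) = δ.length := by rw [hδ]; exact hδred
          rcases cs.length_mul_simple w i with h | h <;> omega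
        have hred2 : cs.IsReduced (δ ++ [i]) := by
          show ℓ (π (δ ++ [i])) = _
          rw [hword, List.length_append, List.length_singleton, hlenw]
        obtain ⟨j, hj, hjeq⟩ := rightExchange cs ht hlt hword
        rw [List.length_append, List.length_singleton] at hj
        rcases Nat.lt_or_ge j δ.length with hjlt | hjge
        · -- j inside δ
          right
          have herase : (δ ++ [i]).eraseIdx j = δ.eraseIdx j ++ [i] :=
            List.eraseIdx_append_of_lt_length hjlt [i]
          rw [herase, cs.wordProd_append, cs.wordProd_singleton] at hjeq
          have hkey : π (δ.eraseIdx j) = w * t * cs.simple i := by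
            rw [← hjeq, cs.simple_mul_simple_cancel_right]
          have hTlow := (IH (ℓ (w * cs.simple i)) (by omega) (w * cs.simple i) rfl).1
          have := hTlow δ hδred hδ.symm (δ.eraseIdx j) (List.eraseIdx_sublist _ _)
          rwa [hkey] at this
        · -- j = δ.length
          left
          have hj' : j = δ.length := by omega
          subst hj'
          have herase : (δ ++ [i]).eraseIdx δ.length = δ := by
            rw [List.eraseIdx_eq_take_drop_succ]
            rw [List.take_left]
            have : ((δ ++ [i] : List B)).drop (δ.length + 1) = [] := by
              apply List.drop_eq_nil_of_le
              rw [List.length_append, List.length_singleton]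
            rw [this, List.append_nil]
          rw [herase, ← hδ] at hjeq
          -- w * t = w * s i, so w * t * s i = w
          have : w * t * cs.simple i = w := by
            rw [← hjeq, cs.simple_mul_simple_cancel_right]
          rw [this]
          exact chle_refl cs w
  -- Part Pchain
  have Pchain : ∀ u : W, chle cs u w → ∀ i : B,
      chle cs (u * cs.simple i) w ∨ chle cs (u * cs.simple i) (w * cs.simple i) := by
    intro u hu i
    induction hu using Relation.ReflTransGen.head_induction_on with
    | refl => exact Or.inr (chle_refl cs _)
    | head hstep hchain ih =>
      rename_i a c
      obtain ⟨hlen, t, ht, hc⟩ := hstep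
      have ha : a = c * t := by rw [hc, mul_assoc, ht.mul_self, mul_one]
      have hlt : ℓ (c * t) < ℓ c := by rw [← ha]; exact hlen
      -- get P-part at c
      have hPc : chle cs (c * t * cs.simple i) c ∨
          chle cs (c * t * cs.simple i) (c * cs.simple i) := by
        rcases chle_cases cs hchain with rfl | hlc
        · exact Ppart t ht hlt i
        · exact (IH (ℓ c) (by omega) c rfl).2.1 t ht hlt i
      rw [← ha] at hPc
      rcases hPc with h | h
      · exact Or.inl (chle_trans cs h hchain)
      · rcases ih with h2 | h2
        · exact Or.inl (chle_trans cs h h2)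
        · exact Or.inr (chle_trans cs h h2)
  refine ⟨?_, Ppart, Pchain⟩
  -- Part T
  intro ω hred hπ ω' hsub
  rcases ω.eq_nil_or_concat' with rfl | ⟨γ, b, rfl⟩
  · have : ω' = [] := List.sublist_nil.mp hsub
    subst this
    rw [← hπ]
    exact chle_refl cs _
  · have h1 : π (γ ++ [b]) = π γ * cs.simple b := by
      rw [cs.wordProd_append, cs.wordProd_singleton]
    have h2 : ℓ (π γ * cs.simple b) = γ.length + 1 := by
      have := hred
      rw [CoxeterSystem.IsReduced, h1, List.length_append, List.length_singleton] at this
      exact this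
    have hγlen : ℓ (π γ) = γ.length := by
      have hle : ℓ (π γ) ≤ γ.length := cs.length_wordProd_le γ
      have hge : ℓ (π γ * cs.simple b) ≤ ℓ (π γ) + 1 := by
        have := cs.length_mul_le (π γ) (cs.simple b)
        rwa [cs.length_simple] at this
      omega
    have hγred : cs.IsReduced γ := hγlen
    have hn : n = γ.length + 1 := by rw [← hw, ← hπ, h1, h2]
    have hstep : rstep cs (π γ) w := by
      refine ⟨?_, cs.simple b, cs.isReflection_simple b, ?_⟩
      · rw [hw]; omega
      · rw [← hπ, h1]
    rcases List.sublist_append_iff.mp hsub with ⟨r₁, r₂, rfl, hr₁, hr₂⟩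
    have hTlow := (IH (ℓ (π γ)) (by omega) (π γ) rfl).1 γ hγred rfl r₁ hr₁
    rcases List.sublist_singleton.mp hr₂ with rfl | rfl
    · rw [List.append_nil]
      exact Relation.ReflTransGen.tail hTlow hstep
    · have hπ' : π (r₁ ++ [b]) = π r₁ * cs.simple b := by
        rw [cs.wordProd_append, cs.wordProd_singleton]
      rw [hπ']
      rcases (IH (ℓ (π γ)) (by omega) (π γ) rfl).2.2 (π r₁) hTlow b with h | h
      · exact Relation.ReflTransGen.tail h hstep
      · rw [← hπ, h1]
        exact h

lemma brle_iff_chle {u w : W} : BruhatLE cs u w ↔ chle cs u w := by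
  constructor
  · rintro ⟨ω, hred, hπ, ω', hsub, hπ'⟩
    have := (grand cs (ℓ w) w rfl).1 ω hred hπ ω' hsub
    rwa [hπ'] at this
  · intro h
    obtain ⟨ω, hred, hω⟩ := cs.exists_reduced_word' w
    obtain ⟨ω', hsub, hred', hπ'⟩ := chle_subword cs h ω hred hω.symm
    exact ⟨ω, hred, hω.symm, ω', hsub, hπ'⟩

/-- The full subword property. -/
lemma brle_subword {u w : W} (h : BruhatLE cs u w) :
    ∀ ω : List B, cs.IsReduced ω → π ω = w →
      ∃ ω', ω'.Sublist ω ∧ cs.IsReduced ω' ∧ π ω' = u :=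
  chle_subword cs ((brle_iff_chle cs).mp h)

lemma brle_refl (w : W) : BruhatLE cs w w := by
  obtain ⟨ω, hred, hω⟩ := cs.exists_reduced_word' w
  exact ⟨ω, hred, hω.symm, ω, List.Sublist.refl _, hω.symm⟩

lemma brle_trans {u v w : W} (h1 : BruhatLE cs u v) (h2 : BruhatLE cs v w) :
    BruhatLE cs u w :=
  (brle_iff_chle cs).mpr (chle_trans cs ((brle_iff_chle cs).mp h1) ((brle_iff_chle cs).mp h2))

lemma brle_length {u w : W} (h : BruhatLE cs u w) : ℓ u ≤ ℓ w :=
  chle_length cs ((brle_iff_chle cs).mp h)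

lemma brle_one_le (w : W) : BruhatLE cs 1 w := by
  obtain ⟨ω, hred, hω⟩ := cs.exists_reduced_word' w
  exact ⟨ω, hred, hω.symm, [], List.nil_sublist _, cs.wordProd_nil⟩

lemma brle_le_one {u : W} (h : BruhatLE cs u 1) : u = 1 := by
  obtain ⟨ω, hred, hπ, ω', hsub, hπ'⟩ := h
  have : ω.length = 0 := by
    have := hred
    rw [CoxeterSystem.IsReduced, hπ, cs.length_one] at this
    omega
  have hω : ω = [] := List.eq_nil_of_length_eq_zero this
  subst hω
  have : ω' = [] := List.sublist_nil.mp hsub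
  subst this
  rw [← hπ', cs.wordProd_nil]

/-- If `s i * w < w`, then `i :: α` is reduced whenever `α` is a reduced word of `s i * w`. -/
lemma cons_reduced {i : B} {w : W} (hdesc : ℓ (cs.simple i * w) < ℓ w)
    {α : List B} (hred : cs.IsReduced α) (hα : π α = cs.simple i * w) :
    cs.IsReduced (i :: α) ∧ π (i :: α) = w := by
  have hπ : π (i :: α) = w := by
    rw [cs.wordProd_cons, hα, cs.simple_mul_simple_cancel_left]
  have hlen : ℓ w = ℓ (cs.simple i * w) + 1 := by
    rcases cs.length_simple_mul w i with h | h <;> omega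
  constructor
  · show ℓ (π (i :: α)) = _
    rw [hπ, List.length_cons]
    have : ℓ (π α) = α.length := hred
    rw [hα] at this
    omega
  · exact hπ

/-- Left Z-lemma: if `s i * w < w` and `u ≤ w` then `u ≤ s i * w` or `s i * u ≤ s i * w`. -/
lemma brle_smul_cases {i : B} {u w : W} (hdesc : ℓ (cs.simple i * w) < ℓ w)
    (h : BruhatLE cs u w) :
    BruhatLE cs u (cs.simple i * w) ∨ BruhatLE cs (cs.simple i * u) (cs.simple i * w) := by
  obtain ⟨α, hαred, hα⟩ := cs.exists_reduced_word' (cs.simple i * w)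
  obtain ⟨hred2, hπ2⟩ := cons_reduced cs hdesc hαred hα.symm
  obtain ⟨ω', hsub, hred', hπ'⟩ := brle_subword cs h (i :: α) hred2 hπ2
  cases hsub with
  | cons _ h2 =>
    exact Or.inl ⟨α, hαred, hα.symm, ω', h2, hπ'⟩
  | cons_cons _ h2 =>
    rename_i β
    right
    refine ⟨α, hαred, hα.symm, β, h2, ?_⟩
    rw [← hπ', cs.wordProd_cons, cs.simple_mul_simple_cancel_left]

/-- If `s i * w < w` and `u ≤ s i * w` then both `u ≤ w` and `s i * u ≤ w`. -/
lemma brle_lift {i : B} {u w : W} (hdesc : ℓ (cs.simple i * w) < ℓ w)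
    (h : BruhatLE cs u (cs.simple i * w)) :
    BruhatLE cs u w ∧ BruhatLE cs (cs.simple i * u) w := by
  obtain ⟨α, hαred, hα, ω', hsub, hπ'⟩ := h
  obtain ⟨hred2, hπ2⟩ := cons_reduced cs hdesc hαred hα
  constructor
  · exact ⟨i :: α, hred2, hπ2, ω', hsub.cons i, hπ'⟩
  · refine ⟨i :: α, hred2, hπ2, i :: ω', hsub.cons₂ i, ?_⟩
    rw [cs.wordProd_cons, hπ']

/-- If `ℓ (s i * u) > ℓ u` then `u ≤ s i * u`. -/
lemma brle_of_ascent {i : B} {u : W} (h : ℓ u < ℓ (cs.simple i * u)) :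
    BruhatLE cs u (cs.simple i * u) := by
  have hdesc : ℓ (cs.simple i * (cs.simple i * u)) < ℓ (cs.simple i * u) := by
    rwa [cs.simple_mul_simple_cancel_left]
  have h' : BruhatLE cs u (cs.simple i * (cs.simple i * u)) := by
    rw [cs.simple_mul_simple_cancel_left]
    exact brle_refl cs u
  exact (brle_lift cs hdesc h').1

/-- If `ℓ (s i * u) < ℓ u` then `s i * u ≤ u`. -/
lemma brle_of_descent {i : B} {u : W} (h : ℓ (cs.simple i * u) < ℓ u) :
    BruhatLE cs (cs.simple i * u) u :=
  (brle_lift cs h (brle_refl cs (cs.simple i * u))).1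

/-- Property Z: if `s i * w < w` and `u ≤ w`, then `s i * u ≤ w`. -/
lemma brle_smul_le {i : B} {u w : W} (hdesc : ℓ (cs.simple i * w) < ℓ w)
    (h : BruhatLE cs u w) : BruhatLE cs (cs.simple i * u) w := by
  rcases brle_smul_cases cs hdesc h with h2 | h2
  · exact (brle_lift cs hdesc h2).2
  · exact (brle_lift cs hdesc h2).1

lemma exists_word_of_mem_closure {X : Set B} {a : W}
    (ha : a ∈ Subgroup.closure (cs.simple '' X)) :
    ∃ ω : List B, (∀ b ∈ ω, b ∈ X) ∧ π ω = a := by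
  induction ha using Subgroup.closure_induction with
  | mem x hx =>
    obtain ⟨b, hb, rfl⟩ := hx
    exact ⟨[b], by simpa using hb, cs.wordProd_singleton b⟩
  | one => exact ⟨[], by simp, cs.wordProd_nil⟩
  | mul x y hx hy ihx ihy =>
    obtain ⟨ω₁, h₁, hπ₁⟩ := ihx
    obtain ⟨ω₂, h₂, hπ₂⟩ := ihy
    refine ⟨ω₁ ++ ω₂, ?_, by rw [cs.wordProd_append, hπ₁, hπ₂]⟩
    intro b hb
    rcases List.mem_append.mp hb with h | h
    · exact h₁ b h
    · exact h₂ b h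
  | inv x hx ihx =>
    obtain ⟨ω₁, h₁, hπ₁⟩ := ihx
    refine ⟨ω₁.reverse, ?_, by rw [cs.wordProd_reverse, hπ₁]⟩
    intro b hb
    exact h₁ b (List.mem_reverse.mp hb)

/-- The exchange-flip lemma: if `v` has left descent `i` but `v * s k` does not,
then `s i * v = v * s k`. -/
lemma exchange_flip {i k : B} {v : W} (hdesc : ℓ (cs.simple i * v) < ℓ v)
    (hasc : ℓ (v * cs.simple k) < ℓ (cs.simple i * (v * cs.simple k))) :
    cs.simple i * v = v * cs.simple k := by
  have hzv : ℓ v = ℓ (cs.simple i * v) + 1 := by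
    rcases cs.length_simple_mul v i with h | h <;> omega
  have hzk : cs.simple i * (v * cs.simple k) = (cs.simple i * v) * cs.simple k := by
    rw [mul_assoc]
  rw [hzk] at hasc
  have hzk_le : ℓ ((cs.simple i * v) * cs.simple k) ≤ ℓ (cs.simple i * v) + 1 := by
    have := cs.length_mul_le (cs.simple i * v) (cs.simple k)
    rwa [cs.length_simple] at this
  have hvk_desc : ℓ (v * cs.simple k) + 1 = ℓ v := by
    rcases cs.length_mul_simple v k with h | h <;> omega
  obtain ⟨δ, hδred, hδ⟩ := cs.exists_reduced_word' (cs.simple i * v)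
  obtain ⟨hred2, hπ2⟩ := cons_reduced cs hdesc hδred hδ.symm
  obtain ⟨j, hj, hjeq⟩ := rightExchange cs (cs.isReflection_simple k)
    (by omega) hπ2
  rw [List.length_cons] at hj
  rcases j with _ | m
  · rw [List.eraseIdx_cons_zero, ← hδ] at hjeq
    exact hjeq
  · exfalso
    rw [List.eraseIdx_cons_succ, cs.wordProd_cons] at hjeq
    have hm : m < δ.length := by omega
    have hlen2 : π (δ.eraseIdx m) = (cs.simple i * v) * cs.simple k := by
      rw [← cs.simple_mul_simple_cancel_left (w := π (δ.eraseIdx m)) (i := i), hjeq,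
        mul_assoc]
    have hle : ℓ (π (δ.eraseIdx m)) ≤ δ.length - 1 := by
      have h1 := cs.length_wordProd_le (δ.eraseIdx m)
      have h2 : (δ.eraseIdx m).length + 1 = δ.length := List.length_eraseIdx_add_one hm
      omega
    have hδlen : δ.length = ℓ (cs.simple i * v) := by
      have h4 := hδred
      rw [CoxeterSystem.IsReduced, ← hδ] at h4
      omega
    rw [hlen2] at hle
    omega

lemma lCoset_self (W₁ : Subgroup W) (u : W) : u ∈ lCoset W₁ u :=
  ⟨1, one_mem _, (mul_one u).symm⟩

lemma mul_mem_lCoset {W₁ : Subgroup W} {σ u : W} (hu : u ∈ lCoset W₁ σ) {b : W}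
    (hb : b ∈ W₁) : u * b ∈ lCoset W₁ σ := by
  obtain ⟨c, hc, rfl⟩ := hu
  exact ⟨c * b, mul_mem hc hb, mul_assoc _ _ _⟩

lemma inv_mul_mem_of_lCoset {W₁ : Subgroup W} {σ u v : W} (hu : u ∈ lCoset W₁ σ)
    (hv : v ∈ lCoset W₁ σ) : u⁻¹ * v ∈ W₁ := by
  obtain ⟨b, hb, rfl⟩ := hu
  obtain ⟨c, hc, rfl⟩ := hv
  have : (σ * b)⁻¹ * (σ * c) = b⁻¹ * c := by group
  rw [this]
  exact mul_mem (inv_mem hb) hc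

lemma lCoset_eq_of_mem {W₁ : Subgroup W} {σ v : W} (h : v ∈ lCoset W₁ σ) :
    lCoset W₁ v = lCoset W₁ σ := by
  obtain ⟨b, hb, rfl⟩ := h
  ext x
  constructor
  · rintro ⟨c, hc, rfl⟩
    exact ⟨b * c, mul_mem hb hc, by group⟩
  · rintro ⟨c, hc, rfl⟩
    exact ⟨b⁻¹ * c, mul_mem (inv_mem hb) hc, by group⟩

lemma flip_search {W₁ : Subgroup W} {X : Set B}
    (hW₁ : W₁ = Subgroup.closure (cs.simple '' X)) (i : B) :
    ∀ (ω : List B), (∀ b ∈ ω, b ∈ X) → ∀ v : W, ℓ (cs.simple i * v) < ℓ v →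
    ℓ (v * π ω) < ℓ (cs.simple i * (v * π ω)) →
    ∃ u ∈ lCoset W₁ v, cs.simple i * u ∈ lCoset W₁ v := by
  intro ω
  induction ω with
  | nil =>
    intro _ v hdesc hasc
    rw [cs.wordProd_nil, mul_one] at hasc
    omega
  | cons x ωt ih =>
    intro hmem v hdesc hasc
    have hx : x ∈ X := hmem x List.mem_cons_self
    have hsx : cs.simple x ∈ W₁ := by
      rw [hW₁]; exact Subgroup.subset_closure ⟨x, hx, rfl⟩
    have hv' : v * cs.simple x ∈ lCoset W₁ v := ⟨cs.simple x, hsx, rfl⟩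
    by_cases hdesc' : ℓ (cs.simple i * (v * cs.simple x)) < ℓ (v * cs.simple x)
    · have heq : v * π (x :: ωt) = (v * cs.simple x) * π ωt := by
        rw [cs.wordProd_cons, mul_assoc]
      rw [heq] at hasc
      obtain ⟨u, hu, hu2⟩ := ih (fun b hb => hmem b (List.mem_cons_of_mem _ hb))
        (v * cs.simple x) hdesc' hasc
      rw [lCoset_eq_of_mem hv'] at hu hu2
      exact ⟨u, hu, hu2⟩
    · have hne := cs.length_simple_mul (v * cs.simple x) i
      have hasc' : ℓ (v * cs.simple x) < ℓ (cs.simple i * (v * cs.simple x)) := by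
        rcases hne with h | h <;> omega
      have hkey : cs.simple i * v = v * cs.simple x := exchange_flip cs hdesc hasc'
      exact ⟨v, lCoset_self W₁ v, by rw [hkey]; exact hv'⟩

lemma trichotomy {W₁ : Subgroup W} {X : Set B}
    (hW₁ : W₁ = Subgroup.closure (cs.simple '' X)) (σ : W) (i : B) :
    (∀ v ∈ lCoset W₁ σ, cs.simple i * v ∈ lCoset W₁ σ) ∨
    (∀ v ∈ lCoset W₁ σ, ℓ v < ℓ (cs.simple i * v)) ∨
    (∀ v ∈ lCoset W₁ σ, ℓ (cs.simple i * v) < ℓ v) := by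
  by_cases h2 : ∀ v ∈ lCoset W₁ σ, ℓ v < ℓ (cs.simple i * v)
  · exact Or.inr (Or.inl h2)
  by_cases h3 : ∀ v ∈ lCoset W₁ σ, ℓ (cs.simple i * v) < ℓ v
  · exact Or.inr (Or.inr h3)
  left
  push_neg at h2 h3
  obtain ⟨v₁, hv₁C, hv₁⟩ := h2
  obtain ⟨v₀, hv₀C, hv₀⟩ := h3
  have hv₁desc : ℓ (cs.simple i * v₁) < ℓ v₁ := by
    rcases cs.length_simple_mul v₁ i with h | h <;> omega
  have hv₀asc : ℓ v₀ < ℓ (cs.simple i * v₀) := by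
    rcases cs.length_simple_mul v₀ i with h | h <;> omega
  have ha : v₁⁻¹ * v₀ ∈ W₁ := inv_mul_mem_of_lCoset hv₁C hv₀C
  rw [hW₁] at ha
  obtain ⟨ω, hωX, hωπ⟩ := exists_word_of_mem_closure cs ha
  have hv₀eq : v₀ = v₁ * π ω := by rw [hωπ]; group
  rw [hv₀eq] at hv₀asc
  obtain ⟨u, hu, hu2⟩ := flip_search cs hW₁ i ω hωX v₁ hv₁desc hv₀asc
  rw [lCoset_eq_of_mem hv₁C] at hu hu2
  -- now propagate to all of the coset
  intro v hv
  have hb : u⁻¹ * v ∈ W₁ := inv_mul_mem_of_lCoset hu hv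
  have : cs.simple i * v = (cs.simple i * u) * (u⁻¹ * v) := by group
  rw [this]
  exact mul_mem_lCoset hu2 hb

lemma exists_brmax {W₁ : Subgroup W} {X : Set B}
    (hW₁ : W₁ = Subgroup.closure (cs.simple '' X)) :
    ∀ n : ℕ, ∀ w : W, ℓ w = n → ∀ σ : W,
    ({v | v ∈ lCoset W₁ σ ∧ BruhatLE cs v w}).Nonempty →
    ∃ m, IsBrMax cs {v | v ∈ lCoset W₁ σ ∧ BruhatLE cs v w} m := by
  intro n
  induction n using Nat.strong_induction_on with
  | _ n IH =>
  intro w hw σ hne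
  obtain ⟨v₀, hv₀C, hv₀w⟩ := hne
  by_cases hn0 : n = 0
  · -- w = 1
    have hw1 : w = 1 := by
      rw [← cs.length_eq_zero_iff, hw, hn0]
    have hv₀1 : v₀ = 1 := brle_le_one cs (hw1 ▸ hv₀w)
    refine ⟨1, ⟨⟨hv₀1 ▸ hv₀C, hw1 ▸ brle_refl cs 1⟩, ?_⟩⟩
    intro x hx
    have := hx.2
    rwa [hw1] at this
  · have hwne : w ≠ 1 := by
      intro h
      rw [h, cs.length_one] at hw
      exact hn0 hw.symm
    obtain ⟨i, hdesc⟩ := cs.exists_leftDescent_of_ne_one hwne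
    have hdesc : ℓ (cs.simple i * w) < ℓ w := hdesc
    have hlt : ℓ (cs.simple i * w) < n := by omega
    have hswle : BruhatLE cs (cs.simple i * w) w := brle_of_descent cs hdesc
    rcases trichotomy cs hW₁ σ i with h1 | h2 | h3
    · -- case sC = C
      have hAne : ({v | v ∈ lCoset W₁ σ ∧ BruhatLE cs v (cs.simple i * w)}).Nonempty := by
        rcases brle_smul_cases cs hdesc hv₀w with h | h
        · exact ⟨v₀, hv₀C, h⟩
        · exact ⟨cs.simple i * v₀, h1 v₀ hv₀C, h⟩
      obtain ⟨m', hm'⟩ := IH (ℓ (cs.simple i * w)) hlt (cs.simple i * w) rfl σ hAne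
      obtain ⟨⟨hm'C, hm'le⟩, hm'max⟩ := hm'
      by_cases hm'desc : ℓ (cs.simple i * m') < ℓ m'
      · -- max is m'
        refine ⟨m', ⟨⟨hm'C, brle_trans cs hm'le hswle⟩, ?_⟩⟩
        intro v hv
        rcases brle_smul_cases cs hdesc hv.2 with h | h
        · exact hm'max v ⟨hv.1, h⟩
        · have hsv : BruhatLE cs (cs.simple i * v) m' := hm'max _ ⟨h1 v hv.1, h⟩
          have := brle_smul_le cs hm'desc hsv
          rwa [cs.simple_mul_simple_cancel_left] at this
      · -- max is s i * m'
        have hm'asc : ℓ m' < ℓ (cs.simple i * m') := by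
          rcases cs.length_simple_mul m' i with h | h <;> omega
        refine ⟨cs.simple i * m', ⟨⟨h1 m' hm'C, (brle_lift cs hdesc hm'le).2⟩, ?_⟩⟩
        intro v hv
        have hd : ℓ (cs.simple i * (cs.simple i * m')) < ℓ (cs.simple i * m') := by
          rwa [cs.simple_mul_simple_cancel_left]
        rcases brle_smul_cases cs hdesc hv.2 with h | h
        · exact brle_trans cs (hm'max v ⟨hv.1, h⟩) (brle_of_ascent cs hm'asc)
        · have hsv : BruhatLE cs (cs.simple i * v) m' := hm'max _ ⟨h1 v hv.1, h⟩
          have hsv' : BruhatLE cs (cs.simple i * v) (cs.simple i * (cs.simple i * m')) := by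
            rwa [cs.simple_mul_simple_cancel_left]
          have := (brle_lift cs hd hsv').2
          rwa [cs.simple_mul_simple_cancel_left] at this
    · -- case all ascents : K(w) ⊆ K(sw)
      have hsubset : ∀ v ∈ lCoset W₁ σ, BruhatLE cs v w → BruhatLE cs v (cs.simple i * w) := by
        intro v hvC hvw
        rcases brle_smul_cases cs hdesc hvw with h | h
        · exact h
        · exact brle_trans cs (brle_of_ascent cs (h2 v hvC)) h
      obtain ⟨m, hm⟩ := IH (ℓ (cs.simple i * w)) hlt (cs.simple i * w) rfl σ
        ⟨v₀, hv₀C, hsubset v₀ hv₀C hv₀w⟩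
      obtain ⟨⟨hmC, hmle⟩, hmmax⟩ := hm
      refine ⟨m, ⟨⟨hmC, brle_trans cs hmle hswle⟩, ?_⟩⟩
      intro v hv
      exact hmmax v ⟨hv.1, hsubset v hv.1 hv.2⟩
    · -- case all descents : K(w) = s i • K_{C'}(sw) with C' = lCoset W₁ (s i * σ)
      have hmemC' : ∀ v, v ∈ lCoset W₁ σ → cs.simple i * v ∈ lCoset W₁ (cs.simple i * σ) := by
        rintro v ⟨b, hb, rfl⟩
        exact ⟨b, hb, by rw [mul_assoc]⟩
      have hmemC : ∀ v, v ∈ lCoset W₁ (cs.simple i * σ) → cs.simple i * v ∈ lCoset W₁ σ := by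
        rintro v ⟨b, hb, rfl⟩
        exact ⟨b, hb, by rw [← mul_assoc, cs.simple_mul_simple_cancel_left]⟩
      have hmap : ∀ v ∈ lCoset W₁ σ, BruhatLE cs v w →
          BruhatLE cs (cs.simple i * v) (cs.simple i * w) := by
        intro v hvC hvw
        rcases brle_smul_cases cs hdesc hvw with h | h
        · exact brle_trans cs (brle_of_descent cs (h3 v hvC)) h
        · exact h
      obtain ⟨m₂, hm₂⟩ := IH (ℓ (cs.simple i * w)) hlt (cs.simple i * w) rfl (cs.simple i * σ)
        ⟨cs.simple i * v₀, hmemC' v₀ hv₀C, hmap v₀ hv₀C hv₀w⟩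
      obtain ⟨⟨hm₂C, hm₂le⟩, hm₂max⟩ := hm₂
      refine ⟨cs.simple i * m₂, ⟨⟨hmemC m₂ hm₂C, (brle_lift cs hdesc hm₂le).2⟩, ?_⟩⟩
      intro v hv
      have hsv : BruhatLE cs (cs.simple i * v)  m₂ :=
        hm₂max _ ⟨hmemC' v hv.1, hmap v hv.1 hv.2⟩
      have hd : ℓ (cs.simple i * (cs.simple i * m₂)) < ℓ (cs.simple i * m₂) :=
        h3 _ (hmemC m₂ hm₂C)
      have hsv' : BruhatLE cs (cs.simple i * v) (cs.simple i * (cs.simple i * m₂)) := by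
        rwa [cs.simple_mul_simple_cancel_left]
      have := (brle_lift cs hd hsv').2
      rwa [cs.simple_mul_simple_cancel_left] at this

end BruhatAux

/-- Let `W₁` be a standard parabolic subgroup and `σ, w ∈ W`, and set
`K_{σW₁}(w) = { v ∈ σW₁ : v ≤ w }`.  Then `K_{σW₁}(w)` is nonempty if and only if
`brmin(σW₁) ≤ w`, and if it is nonempty then it has a unique maximal element in the
Bruhat order. -/
theorem stmt_13 (cs : CoxeterSystem M W) (W₁ : Subgroup W)
    (h₁ : IsStdParabolic cs W₁) (σ w : W) (mσ : W)
    (hmσ : IsBrMin cs (lCoset W₁ σ) mσ) :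
    ({v | v ∈ lCoset W₁ σ ∧ BruhatLE cs v w}.Nonempty ↔ BruhatLE cs mσ w) ∧
    ({v | v ∈ lCoset W₁ σ ∧ BruhatLE cs v w}.Nonempty →
      ∃ m : W, IsBrMax cs {v | v ∈ lCoset W₁ σ ∧ BruhatLE cs v w} m) := by
  obtain ⟨X, hX⟩ := h₁
  constructor
  · constructor
    · rintro ⟨v, hvC, hvw⟩
      exact BruhatAux.brle_trans cs (hmσ.2 v hvC) hvw
    · intro h
      exact ⟨mσ, hmσ.1, h⟩
  · intro hne
    exact BruhatAux.exists_brmax cs hX (cs.length w) w rfl σ hne
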